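/- For every n > 3, the partial sum h_0 + h_1 + ... + h_n is negative. -/

import Mathlib

def t (n : ℕ) : ℤ := (-1) ^ ((Nat.digits 2 n).sum)

def h : ℕ → ℤ
  | 0 => 0
  | 1 => 1
  | (n + 2) => t (n + 2) * h (n + 1) + h n

lemma t_even (n : ℕ) (hn : 0 < n) : t (2*n) = t n := by
  unfold t
  rw [Nat.digits_def' (by norm_num : 1 < 2) (by omega : 0 < 2*n)]
  have h1 : 2*n % 2 = 0 := by omega
  have h2 : 2*n / 2 = n := by omega
  rw [h1, h2]
  simp

lemma t_odd (n : ℕ) : t (2*n+1) = -t n := by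
  unfold t
  rw [Nat.digits_def' (by norm_num : 1 < 2) (by omega : 0 < 2*n+1)]
  have h1 : (2*n+1) % 2 = 1 := by omega
  have h2 : (2*n+1) / 2 = n := by omega
  rw [h1, h2]
  simp [pow_add]

lemma t4 (k : ℕ) (hk : 0 < k) : t (4*k) = t k := by
  have : 4*k = 2*(2*k) := by ring
  rw [this, t_even _ (by omega), t_even _ hk]

lemma t41 (k : ℕ) (hk : 0 < k) : t (4*k+1) = -t k := by
  have : 4*k+1 = 2*(2*k)+1 := by ring
  rw [this, t_odd, t_even _ hk]

lemma t42 (k : ℕ) : t (4*k+2) = -t k := by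
  have : 4*k+2 = 2*(2*k+1) := by ring
  rw [this, t_even _ (by omega), t_odd]

lemma t43 (k : ℕ) : t (4*k+3) = t k := by
  have : 4*k+3 = 2*(2*k+1)+1 := by ring
  rw [this, t_odd, t_odd]
  ring

lemma h_rec (n : ℕ) : h (n+2) = t (n+2) * h (n+1) + h n := by
  rfl

lemma t_pm (n : ℕ) : t n = 1 ∨ t n = -1 := by
  unfold t
  rcases Nat.even_or_odd ((Nat.digits 2 n).sum) with he | ho
  · left; exact he.neg_one_pow
  · right; exact ho.neg_one_pow

def S (n : ℕ) : ℤ := ∑ i ∈ Finset.range (n+1), h i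

lemma S_succ (n : ℕ) : S (n+1) = S n + h (n+1) :=
  Finset.sum_range_succ h (n+1)

/-- The invariant: 18 homogeneous cone inequalities plus an anchor. -/
def Invar (U x y : ℤ) : Prop :=
  700*x - 150*y - 99*U ≥ 0 ∧
  1200*x - 400*y - 119*U ≥ 0 ∧
  400*x - 200*y - 17*U ≥ 0 ∧
  100*x - 75*y + 4*U ≥ 0 ∧
  75*x - 100*y + 17*U ≥ 0 ∧
  1200*x - 2600*y + 577*U ≥ 0 ∧
  275*x - 1875*y + 484*U ≥ 0 ∧
  -800*x - 3600*y + 833*U ≥ 0 ∧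
  -3200*x - 4400*y + 807*U ≥ 0 ∧
  -1600*x - 2000*y + 341*U ≥ 0 ∧
  -2600*x - 2000*y + 151*U ≥ 0 ∧
  -5600*x - 3600*y + 51*U ≥ 0 ∧
  -5200*x - 3200*y - 13*U ≥ 0 ∧
  -200*x - 100*y - 11*U ≥ 0 ∧
  -2000*x - 800*y - 203*U ≥ 0 ∧
  -26400*x - 5200*y - 5373*U ≥ 0 ∧
  8800*x + 26800*y - 14941*U ≥ 0 ∧
  9000*x + 4600*y - 3819*U ≥ 0 ∧
  U ≤ -3

lemma t_vals : t 2 = -1 ∧ t 3 = 1 ∧ t 4 = -1 ∧ t 5 = 1 ∧ t 6 = 1 ∧ t 7 = -1 := by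
  have h0 : t 0 = 1 := by simp [t]
  have h1 : t 1 = -1 := by simpa [h0] using t_odd 0
  have h2 : t 2 = -1 := by simpa [h1] using t_even 1 (by norm_num)
  have h3 : t 3 = 1 := by simpa [h1] using t_odd 1
  have h4 : t 4 = -1 := by simpa [h2] using t_even 2 (by norm_num)
  have h5 : t 5 = 1 := by simpa [h2] using t_odd 2
  have h6 : t 6 = 1 := by simpa [h3] using t_even 3 (by norm_num)
  have h7 : t 7 = -1 := by simpa [h3] using t_odd 3
  exact ⟨h2, h3, h4, h5, h6, h7⟩

lemma h_vals : h 2 = -1 ∧ h 3 = 0 ∧ h 4 = -1 ∧ h 5 = -1 ∧ h 6 = -2 ∧ h 7 = 1 := by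
  obtain ⟨t2, t3, t4', t5, t6, t7⟩ := t_vals
  have e2 : h 2 = -1 := by rw [h_rec 0, t2, show h 1 = 1 from rfl, show h 0 = 0 from rfl]; ring
  have e3 : h 3 = 0 := by rw [h_rec 1, t3, e2, show h 1 = 1 from rfl]; ring
  have e4 : h 4 = -1 := by rw [h_rec 2, t4', e3, e2]; ring
  have e5 : h 5 = -1 := by rw [h_rec 3, t5, e4, e3]; ring
  have e6 : h 6 = -2 := by rw [h_rec 4, t6, e5, e4]; ring
  have e7 : h 7 = 1 := by rw [h_rec 5, t7, e6, e5]; ring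
  exact ⟨e2, e3, e4, e5, e6, e7⟩

set_option maxHeartbeats 2000000 in
lemma key : ∀ k : ℕ, Invar (S (4*k+7)) (h (4*k+7)) (h (4*k+6)) ∧
    S (4*k+4) < 0 ∧ S (4*k+5) < 0 ∧ S (4*k+6) < 0 ∧ S (4*k+7) < 0 := by
  intro k
  induction k with
  | zero =>
    obtain ⟨e2, e3, e4, e5, e6, e7⟩ := h_vals
    have hS0 : S 0 = 0 := by simp [S, h]
    have hS1 : S 1 = 1 := by rw [show (1:ℕ) = 0+1 from rfl, S_succ, hS0]; simp [h]
    have hS2 : S 2 = 0 := by rw [show (2:ℕ) = 1+1 from rfl, S_succ, hS1, e2]; ring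
    have hS3 : S 3 = 0 := by rw [show (3:ℕ) = 2+1 from rfl, S_succ, hS2, e3]; ring
    have hS4 : S 4 = -1 := by rw [show (4:ℕ) = 3+1 from rfl, S_succ, hS3, e4]; ring
    have hS5 : S 5 = -2 := by rw [show (5:ℕ) = 4+1 from rfl, S_succ, hS4, e5]; ring
    have hS6 : S 6 = -4 := by rw [show (6:ℕ) = 5+1 from rfl, S_succ, hS5, e6]; ring
    have hS7 : S 7 = -3 := by rw [show (7:ℕ) = 6+1 from rfl, S_succ, hS6, e7]; ring
    refine ⟨?_, by rw [show 4*0+4 = 4 by norm_num, hS4]; norm_num,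
      by rw [show 4*0+5 = 5 by norm_num, hS5]; norm_num,
      by rw [show 4*0+6 = 6 by norm_num, hS6]; norm_num,
      by rw [show 4*0+7 = 7 by norm_num, hS7]; norm_num⟩
    rw [show 4*0+7 = 7 by norm_num, show 4*0+6 = 6 by norm_num, hS7, e7, e6]
    unfold Invar
    norm_num
  | succ k ih =>
    obtain ⟨hInv, _, _, _, _⟩ := ih
    set U := S (4*k+7) with hU
    set x := h (4*k+7) with hx
    set y := h (4*k+6) with hy
    set a := t (k+2) with ha
    -- t values in the new block
    have ta0 : t (4*k+8) = a := by
      have : 4*k+8 = 4*(k+2) := by ring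
      rw [this, t4 _ (by omega)]
    have ta1 : t (4*k+9) = -a := by
      have : 4*k+9 = 4*(k+2)+1 := by ring
      rw [this, t41 _ (by omega)]
    have ta2 : t (4*k+10) = -a := by
      have : 4*k+10 = 4*(k+2)+2 := by ring
      rw [this, t42]
    have ta3 : t (4*k+11) = a := by
      have : 4*k+11 = 4*(k+2)+3 := by ring
      rw [this, t43]
    -- h values in the new block
    have e0 : h (4*k+8) = a*x + y := by
      have := h_rec (4*k+6)
      rw [show 4*k+6+2 = 4*k+8 by ring, show 4*k+6+1 = 4*k+7 by ring] at this
      rw [this, ta0, ← hx, ← hy]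
    have e1 : h (4*k+9) = -a * h (4*k+8) + x := by
      have := h_rec (4*k+7)
      rw [show 4*k+7+2 = 4*k+9 by ring, show 4*k+7+1 = 4*k+8 by ring] at this
      rw [this, ta1, ← hx]
    have e2 : h (4*k+10) = -a * h (4*k+9) + h (4*k+8) := by
      have := h_rec (4*k+8)
      rw [show 4*k+8+2 = 4*k+10 by ring, show 4*k+8+1 = 4*k+9 by ring] at this
      rw [this, ta2]
    have e3 : h (4*k+11) = a * h (4*k+10) + h (4*k+9) := by
      have := h_rec (4*k+9)
      rw [show 4*k+9+2 = 4*k+11 by ring, show 4*k+9+1 = 4*k+10 by ring] at this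
      rw [this, ta3]
    -- S values in the new block
    have s0 : S (4*k+8) = U + h (4*k+8) := by
      rw [show 4*k+8 = (4*k+7)+1 by ring, S_succ]
    have s1 : S (4*k+9) = S (4*k+8) + h (4*k+9) := by
      rw [show 4*k+9 = (4*k+8)+1 by ring, S_succ]
    have s2 : S (4*k+10) = S (4*k+9) + h (4*k+10) := by
      rw [show 4*k+10 = (4*k+9)+1 by ring, S_succ]
    have s3 : S (4*k+11) = S (4*k+10) + h (4*k+11) := by
      rw [show 4*k+11 = (4*k+10)+1 by ring, S_succ]
    have hidx : 4*(k+1)+7 = 4*k+11 := by ring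
    have hidx6 : 4*(k+1)+6 = 4*k+10 := by ring
    have hidx4 : 4*(k+1)+4 = 4*k+8 := by ring
    have hidx5 : 4*(k+1)+5 = 4*k+9 := by ring
    rw [hidx, hidx6, hidx4, hidx5]
    obtain ⟨i1,i2,i3,i4,i5,i6,i7,i8,i9,i10,i11,i12,i13,i14,i15,i16,i17,i18,i19⟩ := hInv
    rcases t_pm (k+2) with hpa | hpa <;> rw [← ha] at hpa <;> rw [hpa] at e0 e1 e2 e3 <;>
    refine ⟨⟨?_,?_,?_,?_,?_,?_,?_,?_,?_,?_,?_,?_,?_,?_,?_,?_,?_,?_,?_⟩,?_,?_,?_,?_⟩ <;>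
      linarith [e0, e1, e2, e3, s0, s1, s2, s3, i1,i2,i3,i4,i5,i6,i7,i8,i9,i10,i11,i12,i13,i14,i15,i16,i17,i18,i19]

theorem stmt12 : ∀ n : ℕ, 3 < n → (∑ i ∈ Finset.range (n + 1), h i) < 0 := by
  intro n hn
  have : (∑ i ∈ Finset.range (n + 1), h i) = S n := rfl
  rw [this]
  obtain ⟨m, rfl⟩ : ∃ m, n = m + 4 := ⟨n - 4, by omega⟩
  obtain ⟨hInv, c4, c5, c6, c7⟩ := key (m / 4)
  have hm : m % 4 = 0 ∨ m % 4 = 1 ∨ m % 4 = 2 ∨ m % 4 = 3 := by omega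
  rcases hm with hr | hr | hr | hr
  · have : m + 4 = 4*(m/4)+4 := by omega
    rw [this]; exact c4
  · have : m + 4 = 4*(m/4)+5 := by omega
    rw [this]; exact c5
  · have : m + 4 = 4*(m/4)+6 := by omega
    rw [this]; exact c6
  · have : m + 4 = 4*(m/4)+7 := by omega
    rw [this]; exact c7
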